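/- Let u : ℝⁿ → ℝ be a nonnegative Lipschitz function vanishing outside a bounded set, and for ε > 0 set u_ε(x) := max(u(x) − ε, 0). Then ∫_{ℝⁿ} |u(x) − u_ε(x)|² dx + ∫_{ℝⁿ} ‖Du(x) − Du_ε(x)‖² dx → 0 as ε → 0⁺; that is, the truncations (u − ε)₊ converge to u in the H¹(ℝⁿ) norm. -/

import Mathlib

open MeasureTheory Filter
open scoped NNReal

/-- **`H¹`-convergence of the truncations `(u − ε)₊` to `u`.**
If `u : ℝⁿ → ℝ` is a nonnegative Lipschitz function vanishing outside a bounded set, then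
the truncations `u_ε = max (u − ε) 0` converge to `u` in the `H¹(ℝⁿ)` norm as `ε → 0⁺`. -/
theorem tendsto_H1_truncation_of_lipschitz
    {n : ℕ} (u : EuclideanSpace ℝ (Fin n) → ℝ) (K : ℝ≥0)
    (hu : LipschitzWith K u) (hu_nonneg : ∀ x, 0 ≤ u x)
    (s : Set (EuclideanSpace ℝ (Fin n))) (hs : Bornology.IsBounded s)
    (hu0 : ∀ x ∉ s, u x = 0) :
    Tendsto
      (fun ε : ℝ => (∫ x, |u x - max (u x - ε) 0| ^ 2) +
        ∫ x, ‖fderiv ℝ u x - fderiv ℝ (fun y => max (u y - ε) 0) x‖ ^ 2)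
      (nhdsWithin 0 (Set.Ioi 0)) (nhds 0) := by
  set t := closure s with ht_def
  have ht_cpt : IsCompact t := hs.isCompact_closure
  have ht_fin : volume t < ⊤ := ht_cpt.measure_lt_top
  have hzero : ∀ x ∉ t, u x = 0 := fun x hx => hu0 x fun h => hx (subset_closure h)
  have hucont : Continuous u := hu.continuous
  have huK : ∀ ε : ℝ, LipschitzWith K (fun y => max (u y - ε) 0) := by
    intro ε
    have hsub : LipschitzWith K (fun y => u y - ε) := fun y z => by
      simpa [edist_sub_right] using hu y z
    exact hsub.max_const 0
  -- fderiv u x = 0 whenever u x = 0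
  have hfd0 : ∀ x, u x = 0 → fderiv ℝ u x = 0 := by
    intro x hx
    exact IsLocalMin.fderiv_eq_zero (Filter.Eventually.of_forall fun y => hx ▸ hu_nonneg y)
  -- fderiv uε x = 0 whenever u x = 0, ε > 0
  have hfdε0 : ∀ ε : ℝ, 0 < ε → ∀ x, u x = 0 →
      fderiv ℝ (fun y => max (u y - ε) 0) x = 0 := by
    intro ε hε x hx
    have hev : (fun y => max (u y - ε) 0) =ᶠ[nhds x] fun _ => 0 := by
      filter_upwards [Metric.ball_mem_nhds x (show 0 < ε / (K + 1) by positivity)] with y hy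
      have h1 : u y ≤ (K : ℝ) * dist y x := by
        have := hu.dist_le_mul y x
        rwa [Real.dist_eq, hx, sub_zero, abs_of_nonneg (hu_nonneg y)] at this
      have h2 : (K : ℝ) * dist y x < ε := by
        calc (K : ℝ) * dist y x ≤ (K + 1) * dist y x := by
              apply mul_le_mul_of_nonneg_right (by linarith [K.coe_nonneg]) dist_nonneg
        _ < (K + 1) * (ε / (K + 1)) := by
              apply mul_lt_mul_of_pos_left hy (by positivity)
        _ = ε := by field_simp
      simp only [max_eq_right (by linarith : u y - ε ≤ 0)]
    rw [hev.fderiv_eq, fderiv_fun_const]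
    rfl
  -- both fderivs vanish outside t
  have houter : ∀ x ∉ t, ∀ ε : ℝ, fderiv ℝ u x = 0 ∧
      fderiv ℝ (fun y => max (u y - ε) 0) x = 0 := by
    intro x hx ε
    have hmem : tᶜ ∈ nhds x := isClosed_closure.isOpen_compl.mem_nhds hx
    constructor
    · have hev : u =ᶠ[nhds x] fun _ => 0 := by
        filter_upwards [hmem] with y hy using hzero y hy
      rw [hev.fderiv_eq, fderiv_fun_const]; rfl
    · have hev : (fun y => max (u y - ε) 0) =ᶠ[nhds x] fun _ => max (0 - ε) 0 := by
        filter_upwards [hmem] with y hy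
        rw [hzero y hy]
      rw [hev.fderiv_eq, fderiv_fun_const]; rfl
  have hT1 : Tendsto (fun ε : ℝ => ∫ x, |u x - max (u x - ε) 0| ^ 2)
      (nhdsWithin 0 (Set.Ioi 0)) (nhds 0) := by
    have hbound_int : Integrable (fun x => (u x) ^ 2) := by
      apply Continuous.integrable_of_hasCompactSupport (hucont.pow 2)
      apply HasCompactSupport.intro ht_cpt
      intro x hx; rw [Pi.pow_apply, hzero x hx]; ring
    have := tendsto_integral_filter_of_dominated_convergence (μ := volume)
      (F := fun (ε : ℝ) x => |u x - max (u x - ε) 0| ^ 2) (f := fun _ => (0:ℝ))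
      (l := nhdsWithin 0 (Set.Ioi 0)) (bound := fun x => (u x) ^ 2)
      (by
        apply Eventually.of_forall
        intro ε
        exact ((hucont.sub ((hucont.sub continuous_const).max continuous_const)).abs.pow 2).aestronglyMeasurable)
      (by
        filter_upwards [self_mem_nhdsWithin] with ε (hε : (0:ℝ) < ε)
        apply Eventually.of_forall
        intro x
        have h1 : max (u x - ε) 0 ≤ u x := max_le (by linarith) (hu_nonneg x)
        have h2 : 0 ≤ max (u x - ε) 0 := le_max_right _ _
        have : |u x - max (u x - ε) 0| ≤ u x := by
          rw [abs_of_nonneg (by linarith)]; linarith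
        calc ‖|u x - max (u x - ε) 0| ^ 2‖ = |u x - max (u x - ε) 0| ^ 2 := by
              rw [Real.norm_eq_abs, abs_of_nonneg (by positivity)]
        _ ≤ (u x) ^ 2 := by
              apply pow_le_pow_left₀ (abs_nonneg _) this)
      hbound_int
      (by
        apply Eventually.of_forall
        intro x
        have h : Tendsto (fun ε : ℝ => ε ^ 2) (nhdsWithin 0 (Set.Ioi 0)) (nhds 0) := by
          have := ((continuous_pow 2).tendsto (0:ℝ)).mono_left
            (nhdsWithin_le_nhds (s := Set.Ioi (0:ℝ)))
          simpa using this
        apply squeeze_zero_norm' _ h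
        filter_upwards [self_mem_nhdsWithin] with ε (hε : (0:ℝ) < ε)
        have h1 : u x - ε ≤ max (u x - ε) 0 := le_max_left _ _
        have h2 : max (u x - ε) 0 ≤ u x := max_le (by linarith [hu_nonneg x]) (hu_nonneg x)
        have : |u x - max (u x - ε) 0| ≤ ε := by
          rw [abs_of_nonneg (by linarith)]; linarith
        calc ‖|u x - max (u x - ε) 0| ^ 2‖ = |u x - max (u x - ε) 0| ^ 2 := by
              rw [Real.norm_eq_abs, abs_of_nonneg (by positivity)]
        _ ≤ ε ^ 2 := pow_le_pow_left₀ (abs_nonneg _) this 2)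
    simpa using this
  have hT2 : Tendsto (fun ε : ℝ =>
      ∫ x, ‖fderiv ℝ u x - fderiv ℝ (fun y => max (u y - ε) 0) x‖ ^ 2)
      (nhdsWithin 0 (Set.Ioi 0)) (nhds 0) := by
    have hbound_int : Integrable (t.indicator fun _ => ((2 * K : ℝ)) ^ 2) := by
      rw [integrable_indicator_iff ht_cpt.measurableSet]
      exact integrableOn_const ht_fin.ne
    have := tendsto_integral_filter_of_dominated_convergence (μ := volume)
      (F := fun (ε : ℝ) x => ‖fderiv ℝ u x - fderiv ℝ (fun y => max (u y - ε) 0) x‖ ^ 2)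
      (f := fun _ => (0:ℝ)) (l := nhdsWithin 0 (Set.Ioi 0))
      (bound := t.indicator fun _ => ((2 * K : ℝ)) ^ 2)
      (by
        apply Eventually.of_forall
        intro ε
        exact (((measurable_fderiv ℝ u).sub (measurable_fderiv ℝ _)).norm.pow_const 2).aestronglyMeasurable)
      (by
        apply Eventually.of_forall
        intro ε
        apply Eventually.of_forall
        intro x
        rw [Real.norm_eq_abs, abs_of_nonneg (by positivity)]
        by_cases hx : x ∈ t
        · rw [Set.indicator_of_mem hx]
          have hb1 : ‖fderiv ℝ u x‖ ≤ (K : ℝ) := norm_fderiv_le_of_lipschitz ℝ hu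
          have hb2 : ‖fderiv ℝ (fun y => max (u y - ε) 0) x‖ ≤ (K : ℝ) :=
            norm_fderiv_le_of_lipschitz ℝ (huK ε)
          have : ‖fderiv ℝ u x - fderiv ℝ (fun y => max (u y - ε) 0) x‖ ≤ 2 * K := by
            calc _ ≤ ‖fderiv ℝ u x‖ + ‖fderiv ℝ (fun y => max (u y - ε) 0) x‖ := norm_sub_le _ _
            _ ≤ 2 * K := by linarith
          exact pow_le_pow_left₀ (norm_nonneg _) this 2
        · rw [Set.indicator_of_notMem hx]
          simp only [(houter x hx ε).1, (houter x hx ε).2]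
          simp)
      hbound_int
      (by
        apply Eventually.of_forall
        intro x
        rcases eq_or_lt_of_le (hu_nonneg x) with hx | hx
        · have heq : (fun ε : ℝ => ‖fderiv ℝ u x -
              fderiv ℝ (fun y => max (u y - ε) 0) x‖ ^ 2) =ᶠ[nhdsWithin (0:ℝ) (Set.Ioi 0)]
              fun _ => (0:ℝ) := by
            filter_upwards [self_mem_nhdsWithin] with ε (hε : (0:ℝ) < ε)
            rw [hfd0 x hx.symm, hfdε0 ε hε x hx.symm]
            simp
          exact Tendsto.congr' heq.symm tendsto_const_nhds
        · have heq : (fun ε : ℝ => ‖fderiv ℝ u x -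
              fderiv ℝ (fun y => max (u y - ε) 0) x‖ ^ 2) =ᶠ[nhdsWithin (0:ℝ) (Set.Ioi 0)]
              fun _ => (0:ℝ) := by
            filter_upwards [Ioo_mem_nhdsGT_of_mem (Set.left_mem_Ico.2 hx)] with ε hε
            have hev : (fun y => max (u y - ε) 0) =ᶠ[nhds x] fun y => u y - ε := by
              have hopen : IsOpen {y | ε < u y} := isOpen_lt continuous_const hucont
              filter_upwards [hopen.mem_nhds (show ε < u x from hε.2)] with y hy
              have hy' : ε < u y := hy
              exact max_eq_left (by linarith)
            rw [hev.fderiv_eq, fderiv_sub_const]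
            simp
          exact Tendsto.congr' heq.symm tendsto_const_nhds)
    simpa using this
  simpa using hT1.add hT2
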